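/- Let f : V → ℝ be an eigenfunction of the negative random walk generator -L^{RW} with eigenvalue λ, and for 1 ≤ k ≤ n-1 define g on k-element subsets ζ ⊆ V by g(ζ) = ∑_{x∈ζ} f(x). If f is not constant, then g is a nonzero eigenfunction of the negative k-particle symmetric exclusion generator -L^{EP} with the same eigenvalue λ; hence Spec(-L^{RW}) ⊆ Spec(-L^{EP}). -/
import Mathlib


open Finset Equiv

variable {n : ℕ}

/-- Exclusion process generator on subsets: `L^{EP} g(ζ) = ∑_{x<y} c_{xy}(g(ζ^{xy}) - g(ζ))`,
where `ζ^{xy}` exchanges the occupation of `x` and `y` (image of `ζ` under the swap). -/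
def epGen (c : Fin n → Fin n → ℝ) (g : Finset (Fin n) → ℝ) (ζ : Finset (Fin n)) : ℝ :=
  ∑ x : Fin n, ∑ y ∈ univ.filter (fun y => x < y),
    c x y * (g (ζ.image (Equiv.swap x y)) - g ζ)

/-- If `f` is a nonconstant eigenfunction of the negative random walk generator with
eigenvalue `lam`, then `g(ζ) = ∑_{x∈ζ} f(x)` is a nonzero eigenfunction (on `k`-element
subsets) of the negative `k`-particle exclusion generator with the same eigenvalue;
hence `Spec(-L^{RW}) ⊆ Spec(-L^{EP})`. -/
theorem rw_eigenfunction_to_exclusion (c : Fin n → Fin n → ℝ)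
    (hsymm : ∀ x y, c x y = c y x) (hnonneg : ∀ x y, 0 ≤ c x y)
    (k : ℕ) (hk1 : 1 ≤ k) (hkn : k ≤ n - 1)
    (lam : ℝ) (f : Fin n → ℝ)
    (heig : ∀ x, -(∑ y ∈ univ.erase x, c x y * (f y - f x)) = lam * f x)
    (hnc : ¬(∃ a : ℝ, ∀ x, f x = a)) :
    (∃ ζ : Finset (Fin n), ζ.card = k ∧ ∑ x ∈ ζ, f x ≠ 0) ∧
    (∀ ζ : Finset (Fin n), ζ.card = k →
      -(epGen c (fun ζ' => ∑ x ∈ ζ', f x) ζ) = lam * ∑ x ∈ ζ, f x) := by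
  have hn2 : 2 ≤ n := by omega
  constructor
  · -- existence of a k-set with nonzero sum
    obtain ⟨a, b, hab⟩ : ∃ a b : Fin n, f a ≠ f b := by
      by_contra h
      push_neg at h
      exact hnc ⟨f ⟨0, by omega⟩, fun x => h x _⟩
    have hab' : a ≠ b := fun h => hab (by rw [h])
    set S : Finset (Fin n) := univ \ {a, b} with hS
    have hScard : S.card = n - 2 := by
      rw [hS, Finset.card_sdiff_of_subset (Finset.subset_univ _)]
      simp [hab']
    obtain ⟨T, hTS, hTcard⟩ : ∃ T ⊆ S, T.card = k - 1 :=
      Finset.exists_subset_card_eq (by omega)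
    have haT : a ∉ T := fun h => by
      have := hTS h; simp [hS] at this
    have hbT : b ∉ T := fun h => by
      have := hTS h; simp [hS] at this
    by_cases h1 : (∑ x ∈ insert a T, f x) = 0
    · refine ⟨insert b T, ?_, ?_⟩
      · rw [Finset.card_insert_of_notMem hbT, hTcard]; omega
      · rw [Finset.sum_insert hbT]
        rw [Finset.sum_insert haT] at h1
        intro h2
        apply hab
        have : f a = -∑ x ∈ T, f x := by linarith
        have hb : f b = -∑ x ∈ T, f x := by linarith
        rw [this, hb]
    · exact ⟨insert a T, by rw [Finset.card_insert_of_notMem haT, hTcard]; omega, h1⟩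
  · -- eigenfunction identity
    intro ζ _
    have hswap : ∀ x y : Fin n, x ≠ y →
        (∑ z ∈ ζ.image (Equiv.swap x y), f z) - ∑ z ∈ ζ, f z
          = (if x ∈ ζ then f y - f x else 0) + (if y ∈ ζ then f x - f y else 0) := by
      intro x y hxy
      rw [Finset.sum_image (fun p _ q _ h => (Equiv.swap x y).injective h),
        ← Finset.sum_sub_distrib]
      have hpt : ∀ z ∈ ζ, f (Equiv.swap x y z) - f z
          = (if z = x then f y - f x else 0) + (if z = y then f x - f y else 0) := by
        intro z _
        rcases eq_or_ne z x with rfl | hzx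
        · simp [Equiv.swap_apply_left, hxy, hxy.symm]
        · rcases eq_or_ne z y with rfl | hzy
          · simp [Equiv.swap_apply_right, hzx]
          · simp [Equiv.swap_apply_of_ne_of_ne hzx hzy, hzx, hzy]
      rw [Finset.sum_congr rfl hpt, Finset.sum_add_distrib,
        Finset.sum_ite_eq' ζ x, Finset.sum_ite_eq' ζ y]
    set U : Fin n → Fin n → ℝ := fun x y => if x ∈ ζ then c x y * (f y - f x) else 0 with hU
    have hEP : epGen c (fun ζ' => ∑ x ∈ ζ', f x) ζ
        = ∑ x : Fin n, ∑ y ∈ univ.filter (fun y => x < y), (U x y + U y x) := by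
      unfold epGen
      refine Finset.sum_congr rfl fun x _ => Finset.sum_congr rfl fun y hy => ?_
      simp only [Finset.mem_filter] at hy
      have hxy : x ≠ y := ne_of_lt hy.2
      simp only
      rw [hswap x y hxy, hU]
      by_cases hx : x ∈ ζ <;> by_cases hyc : y ∈ ζ <;>
        simp [hx, hyc, hsymm x y] <;> ring
    have hcomm : (∑ x : Fin n, ∑ y ∈ univ.filter (fun y => x < y), U y x)
        = ∑ x : Fin n, ∑ y ∈ univ.filter (fun y => y < x), U x y := by
      rw [Finset.sum_comm' (t' := univ) (s' := fun y => univ.filter (fun x => x < y))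
        (fun x y => by simp)]
    have herase : ∀ x : Fin n,
        (∑ y ∈ univ.filter (fun y => x < y), U x y)
          + ∑ y ∈ univ.filter (fun y => y < x), U x y
        = ∑ y ∈ univ.erase x, U x y := by
      intro x
      have h1 : (univ.erase x).filter (fun y => x < y) = univ.filter (fun y => x < y) := by
        ext z; simp; intro h; exact (ne_of_lt h).symm
      have h2 : (univ.erase x).filter (fun y => ¬ x < y) = univ.filter (fun y => y < x) := by
        ext z
        simp only [Finset.mem_filter, Finset.mem_erase, Finset.mem_univ, true_and, and_true]
        constructor
        · rintro ⟨hz, hz2⟩; exact lt_of_le_of_ne (not_lt.mp hz2) hz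
        · intro h; exact ⟨ne_of_lt h, not_lt.mpr (le_of_lt h)⟩
      rw [← h1, ← h2, Finset.sum_filter_add_sum_filter_not]
    have hinner : ∀ x : Fin n, (∑ y ∈ univ.erase x, U x y)
        = if x ∈ ζ then -(lam * f x) else 0 := by
      intro x
      by_cases hx : x ∈ ζ
      · simp only [hU, hx, if_true]
        have := heig x
        linarith
      · simp [hU, hx]
    have : epGen c (fun ζ' => ∑ x ∈ ζ', f x) ζ = -(lam * ∑ x ∈ ζ, f x) := by
      rw [hEP]
      simp only [Finset.sum_add_distrib]
      rw [hcomm, ← Finset.sum_add_distrib]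
      calc (∑ x : Fin n, ((∑ y ∈ univ.filter (fun y => x < y), U x y)
              + ∑ y ∈ univ.filter (fun y => y < x), U x y))
          = ∑ x : Fin n, ∑ y ∈ univ.erase x, U x y :=
            Finset.sum_congr rfl fun x _ => herase x
        _ = ∑ x : Fin n, (if x ∈ ζ then -(lam * f x) else 0) :=
            Finset.sum_congr rfl fun x _ => hinner x
        _ = ∑ x ∈ ζ, -(lam * f x) := by
            rw [Finset.sum_ite_mem, Finset.univ_inter]
        _ = -(lam * ∑ x ∈ ζ, f x) := by
            simp [Finset.mul_sum]
    rw [this, neg_neg]
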